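/- arXiv:0804.2812 — 3 statements merged into one kernel-verified Lean document; each statement's English description precedes it below -/
import Mathlib

section
/- Let v_1, …, v_m be monomials of the form v_j = p_{α_j} q_{β_j} q_{γ_j} with α_j, β_j, γ_j ∈ {1,…,n}. Then there exist finitely many indices s, constants c_s ∈ C, elements g_s ∈ GL(n,C), and monomials w_{j,s} of the same form p_α q_β q_γ (1 ≤ j ≤ m), such that v_1 ∧ … ∧ v_m = Σ_s c_s · g_s^*(w_{1,s} ∧ … ∧ w_{m,s}) in Λ^m of the polynomial algebra, and such that for each s the tuple (w_{1,s},…,w_{m,s}) has the flag property: w_{j,s} involves only q_1, …, q_j among the q-variables (and arbitrary p-variables) for every j = 1,…,m. -/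
open MvPolynomial MeasureTheory Finset

noncomputable section

namespace Paper

/-! ## The Weyl algebra and its tensor powers -/

/-- The underlying space of the Weyl algebra `A_{2n}`: complex polynomials in `y_1, …, y_{2n}`. -/
abbrev Poly (n : ℕ) := MvPolynomial (Fin (2*n)) ℂ

/-- Index of the variable `p_j = y_{2j-1}` (0-based). -/
def pIdx (n : ℕ) (j : Fin n) : Fin (2*n) := ⟨2*j.1, by have := j.isLt; omega⟩

/-- Index of the variable `q_j = y_{2j}` (0-based). -/
def qIdx (n : ℕ) (j : Fin n) : Fin (2*n) := ⟨2*j.1+1, by have := j.isLt; omega⟩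

def pVar (n : ℕ) (j : Fin n) : Poly n := X (pIdx n j)
def qVar (n : ℕ) (j : Fin n) : Poly n := X (qIdx n j)

/-- Model for the `M`-fold tensor power of the polynomial algebra: polynomials in `M`
groups of `2n` variables. -/
abbrev Tensor (n M : ℕ) := MvPolynomial (Fin M × Fin (2*n)) ℂ

/-- `a_0 ⊗ a_1 ⊗ ⋯` as an element of the tensor power model. -/
def tensorOf {n M : ℕ} (a : Fin M → Poly n) : Tensor n M :=
  ∏ i : Fin M, rename (fun α => (i, α)) (a i)

/-- The derivative `ᵢ∂_α` acting on the `i`-th tensor factor. -/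
def sd {n M : ℕ} (i : Fin M) (α : Fin (2*n)) : Module.End ℂ (Tensor n M) :=
  (pderiv (i, α)).toLinearMap

lemma pderiv_comm {σ : Type*} (i j : σ) (f : MvPolynomial σ ℂ) :
    pderiv i (pderiv j f) = pderiv j (pderiv i f) := by
  classical
  induction f using MvPolynomial.induction_on' with
  | monomial s a =>
      rcases eq_or_ne i j with h | h
      · subst h; rfl
      · simp only [pderiv_monomial]
        rw [Finsupp.tsub_apply, Finsupp.tsub_apply, Finsupp.single_apply,
          Finsupp.single_apply, if_neg h, if_neg (Ne.symm h)]
        rw [tsub_right_comm]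
        simp only [Nat.sub_zero]
        congr 1
        ring
  | add p q hp hq => simp only [map_add, hp, hq]

lemma sd_commute {n M : ℕ} (i i' : Fin M) (α α' : Fin (2*n)) :
    Commute (sd i α) (sd (n := n) i' α') := by
  apply LinearMap.ext
  intro f
  exact pderiv_comm _ _ f

/-- The bidifferential operator `α_{rs} = Σ_i (ᵣ∂_{2i-1} ₛ∂_{2i} − ᵣ∂_{2i} ₛ∂_{2i-1})`. -/
def alphaOp {n M : ℕ} (r s : Fin M) : Module.End ℂ (Tensor n M) :=
  ∑ j : Fin n, (sd r (pIdx n j) * sd s (qIdx n j) - sd r (qIdx n j) * sd s (pIdx n j))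

lemma alpha_commute {n M : ℕ} (r s r' s' : Fin M) :
    Commute (alphaOp (n := n) r s) (alphaOp (n := n) r' s') := by
  refine Commute.sum_left _ _ _ fun j _ => Commute.sum_right _ _ _ fun l _ => ?_
  refine Commute.sub_left ?_ ?_ <;> refine Commute.sub_right ?_ ?_ <;>
    exact Commute.mul_left (Commute.mul_right (sd_commute _ _ _ _) (sd_commute _ _ _ _))
      (Commute.mul_right (sd_commute _ _ _ _) (sd_commute _ _ _ _))

/-- Truncated exponential `exp(c T)` (exact on elements killed by `T^{N+1}`). -/
def expOp {V : Type*} [AddCommGroup V] [Module ℂ V] (c : ℂ) (T : Module.End ℂ V) (N : ℕ) :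
    Module.End ℂ V :=
  ∑ k ∈ Finset.range (N+1), ((k.factorial : ℂ)⁻¹ * c^k) • (T^k)

lemma expOp_commute {V : Type*} [AddCommGroup V] [Module ℂ V] {T T' : Module.End ℂ V}
    (h : Commute T T') (c c' : ℂ) (N N' : ℕ) :
    Commute (expOp c T N) (expOp c' T' N') := by
  refine Commute.sum_left _ _ _ fun k _ => Commute.sum_right _ _ _ fun l _ => ?_
  exact ((h.pow_pow _ _).smul_left _).smul_right _

/-- The operator `∏_{i<j} exp(co(i,j) · α_{sl(j) sl(i)})`, where `sl` maps the configuration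
points to tensor slots. -/
def Sprod (n : ℕ) {m M : ℕ} (co : Fin m → Fin m → ℝ) (sl : Fin m → Fin M) (N : ℕ) :
    Module.End ℂ (Tensor n M) :=
  (Finset.univ.filter fun p : Fin m × Fin m => p.1 < p.2).noncommProd
    (fun p => expOp ((co p.1 p.2 : ℝ) : ℂ) (alphaOp (sl p.2) (sl p.1)) N)
    (fun _ _ _ _ _ => expOp_commute (alpha_commute _ _ _ _) _ _ _ _)

/-- The first Bernoulli polynomial `B_1(x) = x - 1/2`. -/
def B1R (x : ℝ) : ℝ := x - 1/2

/-- The 1-periodic extension `b_1` of `B_1` from `[0,1)`. -/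
def b1R (x : ℝ) : ℝ := Int.fract x - 1/2

/-- Evaluation of all variables at `0`, followed by multiplication (the map `μ`). -/
def evalZero {n M : ℕ} (t : Tensor n M) : ℂ := eval (fun _ => (0:ℂ)) t

/-- The operator `π_{2n} = det(ᵢ∂_j)`, differentiating tensor slots `1, …, 2n`. -/
def piOp (n : ℕ) : Module.End ℂ (Tensor n (2*n+1)) :=
  ∑ σ : Equiv.Perm (Fin (2*n)), (((Equiv.Perm.sign σ : ℤ) : ℂ)) •
    Finset.univ.noncommProd (fun i : Fin (2*n) => sd i.succ (σ i))
      (fun _ _ _ _ _ => sd_commute _ _ _ _)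

/-- The open simplex `0 < u_1 < ⋯ < u_m < 1`. -/
def simplexDom (m : ℕ) : Set (Fin m → ℝ) :=
  {u | StrictMono u ∧ ∀ i, u i ∈ Set.Ioo (0:ℝ) 1}

/-- The Feigin–Felder–Shoikhet cocycle `τ_{2n} = μ_{2n} ∘ S_{2n} ∘ π_{2n}` as a functional of
`2n+1` arguments. -/
def tauFun (n : ℕ) (a : Fin (2*n+1) → Poly n) : ℂ :=
  ∫ u in simplexDom (2*n),
    evalZero ((Sprod n (fun i j => B1R ((Fin.cons 0 u : Fin (2*n+1) → ℝ) j -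
        (Fin.cons 0 u : Fin (2*n+1) → ℝ) i)) id (tensorOf a).totalDegree)
      ((piOp n) (tensorOf a)))

/-! ## Hochschild cochains as multilinear functionals -/

/-- The space of (inhomogeneous, not-necessarily-linear) cochains: a degree-`k`
Hochschild cochain with values in the dual module is a functional of `k+1` arguments. -/
abbrev Cochain (A : Type*) (V : Type*) := ∀ k : ℕ, (Fin (k+1) → A) → V

/-- The Hochschild differential (for `A*`-valued cochains, in the functional picture),
with respect to the product `mul` on `A`. -/
def Dop {A V : Type*} [AddCommGroup V] [Module ℂ V] (mul : A → A → A)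
    (φ : Cochain A V) : Cochain A V
  | 0 => fun _ => 0
  | (m+1) => fun a =>
      (∑ j : Fin (m+1), ((-1:ℂ)^(j:ℕ)) •
        φ m (fun i => if (i:ℕ) < (j:ℕ) then a i.castSucc
             else if (i:ℕ) = (j:ℕ) then mul (a i.castSucc) (a i.succ) else a i.succ))
      + ((-1:ℂ)^(m+1)) • φ m (fun i => if (i:ℕ) = 0 then mul (a (Fin.last (m+1))) (a 0)
          else a i.castSucc)

/-- The Connes differential `B` (adjoint of `B'`), in the functional picture. -/
def Bop {A V : Type*} [One A] [AddCommGroup V] [Module ℂ V] (φ : Cochain A V) :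
    Cochain A V :=
  fun k a => ∑ j : Fin (k+1), ((-1:ℂ)^(k * (j:ℕ))) •
    φ (k+1) (Fin.cons 1 (fun i : Fin (k+1) => a (j + i)))

/-- Insert `x` right after position `j` in the argument list. -/
def insertArg {A : Type*} {m : ℕ} (x : A) (j : Fin (m+1)) (a : Fin (m+1) → A) :
    Fin (m+2) → A :=
  fun i => if _h : (i:ℕ) ≤ (j:ℕ) then a ⟨i.1, by have := j.isLt; omega⟩
    else if (i:ℕ) = (j:ℕ)+1 then x
    else a ⟨i.1 - 1, by have := i.isLt; omega⟩

/-- The interior product `ι_x`: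
`(ι_x φ)(a_0,…,a_k) = Σ_j (−1)^j φ(a_0,…,a_j,x,a_{j+1},…,a_k)`. -/
def iotaOp {A V : Type*} [AddCommGroup V] [Module ℂ V] (x : A) (φ : Cochain A V) :
    Cochain A V :=
  fun k a => ∑ j : Fin (k+1), ((-1:ℂ)^(j:ℕ)) • φ (k+1) (insertArg x j a)

/-- The FFS cocycle as a cochain concentrated in degree `2n`. -/
def tauCochain (n : ℕ) : Cochain (Poly n) ℂ :=
  fun k => if h : k = 2*n
    then fun a => tauFun n (fun i => a (Fin.cast (by omega) i))
    else fun _ => 0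

/-- The interior product `ι_ω = Σ_j ι_{p_j} ι_{q_j}`. -/
def iotaOmegaOp (n : ℕ) {V : Type*} [AddCommGroup V] [Module ℂ V]
    (φ : Cochain (Poly n) V) : Cochain (Poly n) V :=
  fun k a => ∑ j : Fin n, iotaOp (pVar n j) (iotaOp (qVar n j) φ) k a

/-- The Moyal product on polynomials: `a ⋆ b = μ ∘ exp(α_{01}/2) (a ⊗ b)`. -/
def moyalMul (n : ℕ) (a b : Poly n) : Poly n :=
  rename Prod.snd
    (expOp ((1:ℂ)/2) (alphaOp (n := n) (0 : Fin 2) 1)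
      ((rename (fun α => ((0:Fin 2), α)) a * rename (fun α => ((1:Fin 2), α)) b).totalDegree)
      (rename (fun α => ((0:Fin 2), α)) a * rename (fun α => ((1:Fin 2), α)) b))

/-- The Moyal commutator. -/
def moyalBracket (n : ℕ) (a b : Poly n) : Poly n := moyalMul n a b - moyalMul n b a

/-- The Lie derivative `L_ω = d ∘ ι_ω − ι_ω ∘ d`. -/
def LomegaOp (n : ℕ) {V : Type*} [AddCommGroup V] [Module ℂ V]
    (φ : Cochain (Poly n) V) : Cochain (Poly n) V :=
  Dop (moyalMul n) (iotaOmegaOp n φ) - iotaOmegaOp n (Dop (moyalMul n) φ)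

/-- A cochain in the (genuine) normalized Hochschild complex: multilinear in each slot
and vanishing whenever one of the arguments in positions `1, …, k` equals `1`. -/
def IsNormCochain {A V : Type*} [AddCommMonoid A] [Module ℂ A] [One A]
    [AddCommGroup V] [Module ℂ V] (σ : Cochain A V) : Prop :=
  ∀ k : ℕ, (∃ Ψ : MultilinearMap ℂ (fun _ : Fin (k+1) => A) V, σ k = ⇑Ψ) ∧
    (∀ a : Fin (k+1) → A, (∃ i, i ≠ 0 ∧ a i = 1) → σ k a = 0)

/-- `(1/(n−k)!)(−ι_ω)^{n−k} τ_{2n}`, the degree-`2k` component of the cyclic cocycle. -/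
def tau2k (n k : ℕ) : Cochain (Poly n) ℂ :=
  (((-1:ℂ)^(n-k)) * ((n-k).factorial : ℂ)⁻¹) • ((iotaOmegaOp n)^[n-k] (tauCochain n))

/-! ## Matrix coefficients, Lie algebra cohomology and characteristic classes -/

/-- The algebra `A^r_{2n} = A_{2n} ⊗ M_r(ℂ)`, modeled as matrices of polynomials. -/
abbrev MatPoly (n r : ℕ) := Matrix (Fin r) (Fin r) (Poly n)

/-- The product of `A^r_{2n}`: matrix multiplication with Moyal products of entries. -/
def matMul (n r : ℕ) (x y : MatPoly n r) : MatPoly n r :=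
  Matrix.of fun i j => ∑ l, moyalMul n (x i l) (y l j)

/-- The commutator on `A^r_{2n}`. -/
def matBracket (n r : ℕ) (x y : MatPoly n r) : MatPoly n r :=
  matMul n r x y - matMul n r y x

/-- Extension of a functional `φ` on `A_{2n}` to `A^r_{2n}`; on pure tensors it is
`φ(a_0 ⊗ ⋯ ⊗ a_k)·tr(M_0 ⋯ M_k)`. -/
def matExtend {n r k : ℕ} (φ : (Fin (k+1) → Poly n) → ℂ)
    (x : Fin (k+1) → MatPoly n r) : ℂ :=
  ∑ f : Fin (k+1) → Fin r, φ (fun j => x j (f j) (f (j+1)))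

/-- The Lie subalgebra `h = sp_{2n} ⊕ gl_r`: quadratic polynomials tensor the identity,
plus constant polynomials tensor matrices. -/
def hSubalg (n r : ℕ) : Set (MatPoly n r) :=
  {x | ∃ (a : Poly n) (c : Matrix (Fin r) (Fin r) ℂ), a.IsHomogeneous 2 ∧
      x = Matrix.of fun i j => (if i = j then a else 0) + C (c i j)}

/-- The `h`-equivariant projection `pr : g → h`,
`pr(a ⊗ M) = a^{(2)} ⊗ (tr M/r)·1 + a^{(0)} ⊗ M`. -/
def prH (n r : ℕ) (x : MatPoly n r) : MatPoly n r :=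
  Matrix.of fun i j => (if i = j then (r : ℂ)⁻¹ • (homogeneousComponent 2 (∑ l, x l l))
      else 0) + homogeneousComponent 0 (x i j)

/-- The curvature `C(x ∧ y) = [pr x, pr y] − pr [x, y]`. -/
def curv (n r : ℕ) (x y : MatPoly n r) : MatPoly n r :=
  matBracket n r (prH n r x) (prH n r y) - prH n r (matBracket n r x y)

/-- The fiberwise Poisson bracket on polynomials. -/
def poisson (n : ℕ) (f g : Poly n) : Poly n :=
  ∑ j : Fin n, (pderiv (pIdx n j) f * pderiv (qIdx n j) g
    - pderiv (qIdx n j) f * pderiv (pIdx n j) g)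

/-- The defining `2n`-dimensional representation of `sp_{2n}`: the matrix of the linear
map `y_β ↦ {a, y_β}` attached to a quadratic polynomial `a`. -/
def spMatrix (n : ℕ) (a : Poly n) : Matrix (Fin (2*n)) (Fin (2*n)) ℂ :=
  Matrix.of fun α β => coeff (Finsupp.single α 1) (poisson n a (X β))

/-- The `sp_{2n}`-component of an element of `h ⊂ A^r_{2n}`, in the defining
representation. -/
def xPart (n r : ℕ) (H : MatPoly n r) : Matrix (Fin (2*n)) (Fin (2*n)) ℂ :=
  spMatrix n ((r : ℂ)⁻¹ • homogeneousComponent 2 (∑ l, H l l))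

/-- The `gl_r`-component of an element of `h ⊂ A^r_{2n}`. -/
def mPart (n r : ℕ) (H : MatPoly n r) : Matrix (Fin r) (Fin r) ℂ :=
  Matrix.of fun i j => constantCoeff (H i j)

/-- `Â(tX) = det^{1/2}((tX/2)/sinh(tX/2))` as a function of `t`, where
`sinh(z)/z = Σ_k z^{2k}/(2k+1)!` and the square root is the principal branch
(= the power series square root near `t = 0`). -/
def AhatSpF (N : ℕ) (Xm : Matrix (Fin N) (Fin N) ℂ) (t : ℂ) : ℂ :=
  (Matrix.det (∑' k : ℕ, (((2*k+1).factorial : ℂ))⁻¹ • (((t/2) • Xm)^(2*k)))) ^ (-(1/2 : ℂ))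

/-- `Ch(tM) = tr(exp(tM))` as a function of `t`. -/
def ChF (r : ℕ) (Mm : Matrix (Fin r) (Fin r) ℂ) (t : ℂ) : ℂ :=
  ∑' k : ℕ, (t^k * ((k.factorial : ℂ))⁻¹) * Matrix.trace (Mm^k)

/-- The generating function `t ↦ Â(t·x) Ch(t·M)` of the invariant polynomial
`P = Â Ch` at the element `H ∈ h`. -/
def Pgen (n r : ℕ) (H : MatPoly n r) (t : ℂ) : ℂ :=
  AhatSpF (2*n) (xPart n r H) t * ChF r (mPart n r H) t

/-- `P_k(H)`: the degree-`k` homogeneous component of `Â Ch`, evaluated at `H`. -/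
def PkSingle (n r k : ℕ) (H : MatPoly n r) : ℂ :=
  ((k.factorial : ℂ))⁻¹ * iteratedDeriv k (Pgen n r H) 0

/-- The polarization of `P_k` (a symmetric `k`-linear functional with
`PkPol(H,…,H) = P_k(H)`). -/
def PkPol (n r k : ℕ) (h : Fin k → MatPoly n r) : ℂ :=
  ((k.factorial : ℂ))⁻¹ * ∑ S : Finset (Fin k),
    ((-1:ℂ))^(k - S.card) * PkSingle n r k (∑ i ∈ S, h i)

/-- The Chern–Weil cochain `χ(P_k)`. -/
def chiP (n r k : ℕ) (v : Fin (2*k) → MatPoly n r) : ℂ :=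
  ((k.factorial : ℂ))⁻¹ * ((2:ℂ)^k)⁻¹ * ∑ σ : Equiv.Perm (Fin (2*k)),
    ((Equiv.Perm.sign σ : ℤ) : ℂ) *
    PkPol n r k (fun i => curv n r (v (σ ⟨2*i.1, by have := i.isLt; omega⟩))
      (v (σ ⟨2*i.1+1, by have := i.isLt; omega⟩)))

/-- `ev_1(φ)(v_1 ∧ ⋯ ∧ v_m) = Σ_σ sgn(σ) φ(1 ⊗ v_{σ(1)} ⊗ ⋯ ⊗ v_{σ(m)})`. -/
def ev1 {A : Type*} [One A] {m : ℕ} (φ : (Fin (m+1) → A) → ℂ) (v : Fin m → A) : ℂ :=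
  ∑ σ : Equiv.Perm (Fin m), ((Equiv.Perm.sign σ : ℤ) : ℂ) *
    φ (Fin.cons 1 (fun i => v (σ i)))

/-- Argument list for the Chevalley–Eilenberg differential: the bracket `[x_i, x_j]`
followed by the remaining arguments in order. -/
def dCEarg {A : Type*} {m : ℕ} (br : A → A → A) (x : Fin (m+1) → A)
    (i j : Fin (m+1)) : Fin m → A :=
  fun l => if l.1 = 0 then br (x i) (x j)
    else x ⟨(if l.1 - 1 < i.1 then l.1 - 1 else if l.1 < j.1 then l.1 else l.1 + 1),
      by have := l.isLt; split_ifs <;> omega⟩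

/-- The Chevalley–Eilenberg differential with trivial coefficients:
`(dψ)(x_1,…,x_{m+1}) = Σ_{i<j} (−1)^{i+j} ψ([x_i,x_j] ∧ ⋯ x̂_i ⋯ x̂_j ⋯)`. -/
def dCEgen {A : Type*} {m : ℕ} (br : A → A → A) (ψ : (Fin m → A) → ℂ) :
    (Fin (m+1) → A) → ℂ :=
  fun x => ∑ i : Fin (m+1), ∑ j : Fin (m+1),
    if i < j then ((-1:ℂ)^(i.1 + j.1)) * ψ (dCEarg br x i j) else 0

/-- A cochain of the relative Chevalley–Eilenberg complex `C^m(g, h)`: alternating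
multilinear, vanishing whenever an argument lies in `h`, and `h`-invariant. -/
def IsRelCochain {A : Type*} [AddCommGroup A] [Module ℂ A] (br : A → A → A)
    (hs : Set A) {m : ℕ} (ψ : (Fin m → A) → ℂ) : Prop :=
  (∃ Ψ : AlternatingMap ℂ A ℂ (Fin m), ψ = ⇑Ψ) ∧
  (∀ x : Fin m → A, (∃ i, x i ∈ hs) → ψ x = 0) ∧
  (∀ h ∈ hs, ∀ x : Fin m → A, ∑ i : Fin m, ψ (Function.update x i (br h (x i))) = 0)

/-- A polynomial depending only on the `q`-variables. -/
def IsQPoly (n : ℕ) (a : Poly n) : Prop :=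
  ∀ m ∈ a.support, ∀ j : Fin n, m (pIdx n j) = 0

/-- The Lie subalgebra `W_{n,r}` of elements `Σ_j f_j(q) p_j ⊗ 1 + Σ g(q) ⊗ M`. -/
def Wsub (n r : ℕ) : Set (MatPoly n r) :=
  {x | ∃ (f : Fin n → Poly n) (g : Matrix (Fin r) (Fin r) (Poly n)),
      (∀ j, IsQPoly n (f j)) ∧ (∀ i j, IsQPoly n (g i j)) ∧
      x = Matrix.of fun i j => (if i = j then ∑ l, f l * pVar n l else 0) + g i j}

/-- A polynomial involving only the variables `p_1, q_1, …, p_k, q_k`. -/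
def onlyFirstVars (n k : ℕ) (a : Poly n) : Prop :=
  ∀ m ∈ a.support, ∀ α : Fin (2*n), m α ≠ 0 → α.1 < 2*k

/-! ## Additional integral formulas -/

/-- The right-hand side of the key lemmas: `μ_{2n} ∘ ∫_{0=u_1<u_2<⋯<u_{2n}<1}
∏_{1≤i<j≤2n} e^{b_1(u_j−u_i)α_{ji}} ∘ π_{2n} (1 ⊗ a_1 ⊗ ⋯ ⊗ a_{2n})`. -/
def rhsIntegral (n : ℕ) (a : Fin (2*n) → Poly n) : ℂ :=
  ∫ v in simplexDom (2*n-1),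
    evalZero ((Sprod n
      (fun i j : Fin (2*n) => b1R (((fun i : Fin (2*n) => if h : i.1 = 0 then (0:ℝ)
          else v ⟨i.1 - 1, by have := i.isLt; omega⟩) j)
        - ((fun i : Fin (2*n) => if h : i.1 = 0 then (0:ℝ)
          else v ⟨i.1 - 1, by have := i.isLt; omega⟩) i)))
      Fin.succ (tensorOf (Fin.cons 1 a)).totalDegree)
      ((piOp n) (tensorOf (Fin.cons 1 a : Fin (2*n+1) → Poly n))))

/-- The quadratic polynomial `Σ_{ij} x_{ij} p_i q_j` attached to a matrix `x ∈ gl_n`. -/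
def glToWeyl (n : ℕ) (x : Matrix (Fin n) (Fin n) ℂ) : Poly n :=
  ∑ i : Fin n, ∑ j : Fin n, C (x i j) * (pVar n i * qVar n j)

/-- `h_m(a_1,…,a_m) = μ_m ∘ ∫_{[0,1]^m} ∏_{1≤i<j≤m} e^{b_1(u_j−u_i)α_{ji}}
(1 ⊗ a_1 ⊗ ⋯ ⊗ a_m)`. -/
def hm (n m : ℕ) (a : Fin m → Poly n) : ℂ :=
  ∫ u in (Set.univ.pi fun _ : Fin m => Set.Icc (0:ℝ) 1),
    evalZero ((Sprod n (fun i j => b1R (u j - u i)) Fin.succ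
      (tensorOf (Fin.cons 1 a)).totalDegree) (tensorOf (Fin.cons 1 a : Fin (m+1) → Poly n)))

/-- `Â_m(x)`: the degree-`m` Taylor coefficient at `t = 0` of
`t ↦ det((tx/2)/sinh(tx/2))` (full determinant, no square root). -/
def AhatGLCoeff (n : ℕ) (x : Matrix (Fin n) (Fin n) ℂ) (m : ℕ) : ℂ :=
  ((m.factorial : ℂ))⁻¹ * iteratedDeriv m (fun t : ℂ =>
    (Matrix.det (∑' k : ℕ, (((2*k+1).factorial : ℂ))⁻¹ • (((t/2) • x)^(2*k))))⁻¹) 0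

/-! ## Statement 10: GL(n) action and wedge products -/

/-- The substitution automorphism `g^*` induced by `g ∈ GL(n,ℂ)`: it acts on the span
of the `q`'s by the natural action and on the span of the `p`'s by the dual
(inverse-transpose) action, preserving `Σ_j p_j ⊗ q_j`. -/
def glAct (n : ℕ) (g : GL (Fin n) ℂ) : Poly n →ₐ[ℂ] Poly n :=
  aeval (fun α : Fin (2*n) =>
    if α.1 % 2 = 0
    then ∑ i : Fin n,
      C (((g⁻¹ : GL (Fin n) ℂ) : Matrix (Fin n) (Fin n) ℂ) i ⟨α.1/2, by have := α.isLt; omega⟩)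
        * pVar n i
    else ∑ i : Fin n,
      C ((g : Matrix (Fin n) (Fin n) ℂ) ⟨α.1/2, by have := α.isLt; omega⟩ i) * qVar n i)

/-- The wedge `v_1 ∧ ⋯ ∧ v_m` in the exterior algebra of the polynomial algebra. -/
def wedgeOf {n m : ℕ} (v : Fin m → Poly n) : ExteriorAlgebra ℂ (Poly n) :=
  (List.ofFn fun j => ExteriorAlgebra.ι ℂ (v j)).prod

section Aux

lemma glAct_pVar (n : ℕ) (g : GL (Fin n) ℂ) (a : Fin n) :
    glAct n g (pVar n a) = ∑ i : Fin n,
      C (((g⁻¹ : GL (Fin n) ℂ) : Matrix (Fin n) (Fin n) ℂ) i a) * pVar n i := by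
  rw [glAct, pVar, aeval_X]
  have h0 : (pIdx n a).1 % 2 = 0 := by simp [pIdx]
  rw [if_pos h0]
  refine Finset.sum_congr rfl fun i _ => ?_
  have ha : (⟨(pIdx n a).1 / 2, by have := (pIdx n a).isLt; omega⟩ : Fin n) = a :=
    Fin.ext (by simp [pIdx])
  rw [ha]

lemma glAct_qVar (n : ℕ) (g : GL (Fin n) ℂ) (b : Fin n) :
    glAct n g (qVar n b) = ∑ i : Fin n,
      C ((g : Matrix (Fin n) (Fin n) ℂ) b i) * qVar n i := by
  rw [glAct, qVar, aeval_X]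
  have h0 : ¬ ((qIdx n b).1 % 2 = 0) := by simp [qIdx]
  rw [if_neg h0]
  refine Finset.sum_congr rfl fun i _ => ?_
  have hb : (⟨(qIdx n b).1 / 2, by have := (qIdx n b).isLt; omega⟩ : Fin n) = b :=
    Fin.ext (by simp [qIdx]; omega)
  rw [hb]

lemma gl_inv_mul (n : ℕ) (g : GL (Fin n) ℂ) (j k : Fin n) :
    ∑ i : Fin n, ((g⁻¹ : GL (Fin n) ℂ) : Matrix (Fin n) (Fin n) ℂ) j i *
      (g : Matrix (Fin n) (Fin n) ℂ) i k = if j = k then 1 else 0 := by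
  have h : ((g⁻¹ : GL (Fin n) ℂ) : Matrix (Fin n) (Fin n) ℂ) * (g : Matrix (Fin n) (Fin n) ℂ)
      = 1 := by
    rw [← Units.val_mul, inv_mul_cancel, Units.val_one]
  have h2 := congrFun (congrFun h j) k
  simpa [Matrix.mul_apply, Matrix.one_apply] using h2

lemma glAct_C (n : ℕ) (g : GL (Fin n) ℂ) (c : ℂ) : glAct n g (C c) = C c := by
  rw [glAct, aeval_C]; rfl

lemma glAct_comp_inv (n : ℕ) (g : GL (Fin n) ℂ) (x : Poly n) :
    glAct n g (glAct n g⁻¹ x) = x := by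
  have key : (glAct n g).comp (glAct n g⁻¹) = AlgHom.id ℂ (Poly n) := by
    apply MvPolynomial.algHom_ext
    intro α
    simp only [AlgHom.comp_apply, AlgHom.id_apply]
    by_cases hα : α.1 % 2 = 0
    · set k : Fin n := ⟨α.1/2, by have := α.isLt; omega⟩ with hk
      have hXα : (X α : Poly n) = pVar n k := by
        rw [pVar]; congr 1; exact (Fin.ext (by simp [pIdx, hk]; omega)).symm
      rw [hXα, glAct_pVar n g⁻¹, map_sum]
      simp only [map_mul, glAct_C, glAct_pVar n g, inv_inv]
      simp only [Finset.mul_sum]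
      rw [Finset.sum_comm]
      have step : ∀ j : Fin n,
          (∑ i : Fin n, C ((g : Matrix (Fin n) (Fin n) ℂ) i k) *
            (C (((g⁻¹ : GL (Fin n) ℂ) : Matrix (Fin n) (Fin n) ℂ) j i) * pVar n j))
          = (if j = k then (1:ℂ) else 0) • pVar n j := by
        intro j
        rw [← gl_inv_mul n g j k, Finset.sum_smul]
        refine Finset.sum_congr rfl fun i _ => ?_
        rw [← mul_assoc, ← C_mul, mul_comm ((g : Matrix (Fin n) (Fin n) ℂ) i k), C_mul']
      simp only [step]
      simp [Finset.sum_ite_eq', ite_smul, one_smul, zero_smul]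
    · set k : Fin n := ⟨α.1/2, by have := α.isLt; omega⟩ with hk
      have hXα : (X α : Poly n) = qVar n k := by
        rw [qVar]; congr 1; exact (Fin.ext (by simp [qIdx, hk]; omega)).symm
      rw [hXα, glAct_qVar n g⁻¹, map_sum]
      simp only [map_mul, glAct_C, glAct_qVar n g]
      simp only [Finset.mul_sum]
      rw [Finset.sum_comm]
      have step : ∀ j : Fin n,
          (∑ i : Fin n, C (((g⁻¹ : GL (Fin n) ℂ) : Matrix (Fin n) (Fin n) ℂ) k i) *
            (C ((g : Matrix (Fin n) (Fin n) ℂ) i j) * qVar n j))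
          = (if k = j then (1:ℂ) else 0) • qVar n j := by
        intro j
        rw [← gl_inv_mul n g k j, Finset.sum_smul]
        refine Finset.sum_congr rfl fun i _ => ?_
        rw [← mul_assoc, ← C_mul, C_mul']
      simp only [step]
      simp [Finset.sum_ite_eq, ite_smul, one_smul, zero_smul]
  exact AlgHom.congr_fun key x
/-- A linear form in the `q`-variables. -/
def qLin (n : ℕ) (lam : Fin n → ℂ) : Poly n := ∑ k : Fin n, C (lam k) * qVar n k

lemma glAct_qLin (n : ℕ) (g : GL (Fin n) ℂ) (lam : Fin n → ℂ) :
    glAct n g (qLin n lam) = qLin n (Matrix.vecMul lam (g : Matrix (Fin n) (Fin n) ℂ)) := by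
  rw [qLin, map_sum]
  simp only [map_mul, glAct_C, glAct_qVar, Finset.mul_sum]
  rw [Finset.sum_comm, qLin]
  refine Finset.sum_congr rfl fun i _ => ?_
  rw [Matrix.vecMul, dotProduct, map_sum, Finset.sum_mul]
  refine Finset.sum_congr rfl fun k _ => ?_
  rw [← mul_assoc, ← C_mul]

lemma wedgeOf_cons {n m : ℕ} (a : Poly n) (u : Fin m → Poly n) :
    wedgeOf (Fin.cons a u) = ExteriorAlgebra.ι ℂ a * wedgeOf u := by
  rw [wedgeOf, List.ofFn_succ, List.prod_cons, wedgeOf]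
  simp

lemma wedge_mem_span {n : ℕ} : ∀ (m : ℕ) (T : Fin m → Set (Poly n)) (v : Fin m → Poly n),
    (∀ j, v j ∈ Submodule.span ℂ (T j)) →
    wedgeOf v ∈ Submodule.span ℂ
      {x : ExteriorAlgebra ℂ (Poly n) | ∃ u : Fin m → Poly n, (∀ j, u j ∈ T j) ∧ x = wedgeOf u} := by
  intro m
  induction m with
  | zero =>
    intro T v _
    exact Submodule.subset_span ⟨v, fun j => j.elim0, rfl⟩
  | succ m ih =>
    intro T v hv
    have htail := ih (fun j => T j.succ) (Fin.tail v) (fun j => hv j.succ)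
    set B : Poly n →ₗ[ℂ] ExteriorAlgebra ℂ (Poly n) →ₗ[ℂ] ExteriorAlgebra ℂ (Poly n) :=
      (LinearMap.mul ℂ (ExteriorAlgebra ℂ (Poly n))).comp (ExteriorAlgebra.ι ℂ) with hB
    have hwv : wedgeOf v = B (v 0) (wedgeOf (Fin.tail v)) := by
      conv_lhs => rw [← Fin.cons_self_tail v]
      rw [wedgeOf_cons]
      rfl
    rw [hwv]
    have hmem := Submodule.apply_mem_map₂ B (hv 0) htail
    rw [Submodule.map₂_span_span] at hmem
    refine Submodule.span_mono ?_ hmem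
    rintro x ⟨a, ha, y, ⟨u, hu, rfl⟩, rfl⟩
    refine ⟨Fin.cons a u, ?_, ?_⟩
    · intro j
      refine Fin.cases ?_ ?_ j
      · simpa using ha
      · intro i; simpa using hu i
    · rw [wedgeOf_cons]; rfl

/-- Monomials `p_α q_β q_γ` with `β, γ ≤ j`. -/
def flagMon (n : ℕ) (j : ℕ) : Set (Poly n) :=
  {x | ∃ α β γ : Fin n, (β:ℕ) ≤ j ∧ (γ:ℕ) ≤ j ∧ x = pVar n α * qVar n β * qVar n γ}

/-- Generators: `g`-translates of flag wedges. -/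
def genSet (n m : ℕ) : Set (ExteriorAlgebra ℂ (Poly n)) :=
  {x | ∃ (g : GL (Fin n) ℂ) (w : Fin m → Poly n),
    (∀ j : Fin m, w j ∈ flagMon n j) ∧ x = wedgeOf (fun j => glAct n g (w j))}

lemma support_pqq (n : ℕ) (α β γ : Fin n) (mo : Fin (2*n) →₀ ℕ)
    (hmo : mo ∈ (pVar n α * qVar n β * qVar n γ).support) (l : Fin n)
    (hl : mo (qIdx n l) ≠ 0) : l = β ∨ l = γ := by
  have hx : pVar n α * qVar n β * qVar n γ =
      monomial (Finsupp.single (pIdx n α) 1 + Finsupp.single (qIdx n β) 1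
        + Finsupp.single (qIdx n γ) 1) (1 : ℂ) := by
    rw [pVar, qVar, qVar, X, X, X, monomial_mul, monomial_mul, one_mul, one_mul]
  rw [hx, support_monomial, if_neg one_ne_zero, Finset.mem_singleton] at hmo
  subst hmo
  have h1 : pIdx n α ≠ qIdx n l := by
    simp only [pIdx, qIdx, Fin.mk.injEq, ne_eq]; omega
  have h2 : (qIdx n β = qIdx n l) ↔ β = l := by
    simp only [qIdx, Fin.mk.injEq, Fin.ext_iff]; omega
  have h3 : (qIdx n γ = qIdx n l) ↔ γ = l := by
    simp only [qIdx, Fin.mk.injEq, Fin.ext_iff]; omega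
  rw [Finsupp.add_apply, Finsupp.add_apply, Finsupp.single_apply, Finsupp.single_apply,
    Finsupp.single_apply, if_neg h1] at hl
  by_cases hb : qIdx n β = qIdx n l
  · exact Or.inl (h2.mp hb).symm
  · by_cases hc : qIdx n γ = qIdx n l
    · exact Or.inr (h3.mp hc).symm
    · rw [if_neg hb, if_neg hc] at hl; omega
lemma exists_flag_matrix (n : ℕ) : ∀ (m : ℕ) (lam : Fin m → (Fin n → ℂ)),
    ∃ h : GL (Fin n) ℂ, ∀ (j : Fin m) (i : Fin n), (j:ℕ) < (i:ℕ) →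
      Matrix.mulVec (h : Matrix (Fin n) (Fin n) ℂ) (lam j) i = 0 := by
  intro m
  induction m with
  | zero => intro lam; exact ⟨1, fun j => j.elim0⟩
  | succ m ih =>
    intro lam
    obtain ⟨h₀, hh₀⟩ := ih (fun j => lam j.castSucc)
    set μ : Fin n → ℂ := Matrix.mulVec (h₀ : Matrix (Fin n) (Fin n) ℂ) (lam (Fin.last m)) with hμ
    by_cases hvan : ∀ i : Fin n, m < (i:ℕ) → μ i = 0
    · refine ⟨h₀, fun j i hij => ?_⟩
      rcases Fin.eq_castSucc_or_eq_last j with ⟨j', rfl⟩ | rfl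
      · exact hh₀ j' i (by simpa using hij)
      · exact hvan i (by simpa using hij)
    · push_neg at hvan
      obtain ⟨i₀, hi₀m, hi₀ne⟩ := hvan
      have hmn : m < n := lt_trans hi₀m i₀.isLt
      set m' : Fin n := ⟨m, hmn⟩ with hm'
      have hm'i₀ : m' ≠ i₀ := Fin.ne_of_val_ne (by simpa using Nat.ne_of_lt hi₀m)
      set s : Equiv.Perm (Fin n) := Equiv.swap m' i₀ with hs
      set P : Matrix (Fin n) (Fin n) ℂ := Matrix.of (fun i k => if k = s i then 1 else 0) with hP
      have hPvec : ∀ (x : Fin n → ℂ) (i : Fin n), Matrix.mulVec P x i = x (s i) := by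
        intro x i
        simp [Matrix.mulVec, dotProduct, hP, ite_mul, Finset.sum_ite_eq']
      have hPP : P * P = 1 := by
        ext i k
        rw [Matrix.mul_apply]
        simp only [hP, Matrix.of_apply, ite_mul, one_mul, zero_mul]
        rw [Finset.sum_ite_eq' Finset.univ (s i) (fun j => if k = s j then (1:ℂ) else 0)]
        simp only [Finset.mem_univ, if_true, hs, Equiv.swap_apply_self, Matrix.one_apply]
        by_cases hik : i = k
        · simp [hik]
        · simp [hik, Ne.symm hik]
      set ν : Fin n → ℂ := Matrix.mulVec P μ with hν
      have hsm' : s m' = i₀ := by rw [hs]; exact Equiv.swap_apply_left _ _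
      have hνm' : ν m' = μ i₀ := by rw [hν, hPvec, hsm']
      have hνne : ν m' ≠ 0 := by rw [hνm']; exact hi₀ne
      set N : Matrix (Fin n) (Fin n) ℂ :=
        Matrix.of (fun i k => if k = m' ∧ m < (i:ℕ) then -(ν i / ν m') else 0) with hN
      have hNN : N * N = 0 := by
        ext i k
        rw [Matrix.mul_apply]
        rw [show (0 : Matrix (Fin n) (Fin n) ℂ) i k = 0 from rfl]
        refine Finset.sum_eq_zero fun j _ => ?_
        by_cases hj : j = m'
        · subst hj
          have : N m' k = 0 := by simp [hN, hm']
          rw [this, mul_zero]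
        · have : N i j = 0 := by simp [hN, hj]
          rw [this, zero_mul]
      have hE1 : (1 + N) * (1 - N) = 1 := by
        have : (1 + N) * (1 - N) = 1 - N * N := by noncomm_ring
        rw [this, hNN, sub_zero]
      have hE2 : (1 - N) * (1 + N) = 1 := by
        have : (1 - N) * (1 + N) = 1 - N * N := by noncomm_ring
        rw [this, hNN, sub_zero]
      set hEu : GL (Fin n) ℂ := ⟨1 + N, 1 - N, hE1, hE2⟩ with hEudef
      set hPu : GL (Fin n) ℂ := ⟨P, P, hPP, hPP⟩ with hPudef
      have hEvec : ∀ (y : Fin n → ℂ) (i : Fin n), Matrix.mulVec (1 + N) y i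
          = y i + (if m < (i:ℕ) then -(ν i / ν m') * y m' else 0) := by
        intro y i
        rw [Matrix.add_mulVec, Matrix.one_mulVec]
        congr 1
        by_cases hi : m < (i:ℕ)
        · simp [Matrix.mulVec, dotProduct, hN, hi, ite_mul, Finset.sum_ite_eq']
        · simp [Matrix.mulVec, dotProduct, hN, hi]
      refine ⟨hEu * hPu * h₀, fun j i hij => ?_⟩
      have hval : ((hEu * hPu * h₀ : GL (Fin n) ℂ) : Matrix (Fin n) (Fin n) ℂ)
          = (1 + N) * (P * (h₀ : Matrix (Fin n) (Fin n) ℂ)) := by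
        rw [Units.val_mul, Units.val_mul, mul_assoc]
      rw [hval, ← Matrix.mulVec_mulVec, ← Matrix.mulVec_mulVec]
      rcases Fin.eq_castSucc_or_eq_last j with ⟨j', rfl⟩ | rfl
      · have hij' : (j' : ℕ) < (i : ℕ) := by simpa using hij
        have hx := hh₀ j'
        have hPx : ∀ i' : Fin n, (j' : ℕ) < (i' : ℕ) →
            Matrix.mulVec P (Matrix.mulVec (h₀ : Matrix (Fin n) (Fin n) ℂ)
              (lam j'.castSucc)) i' = 0 := by
          intro i' hi'
          rw [hPvec]
          apply hx
          by_cases e1 : i' = m'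
          · rw [e1, hs, Equiv.swap_apply_left]
            exact lt_trans (lt_of_lt_of_le j'.isLt (le_of_eq rfl)) hi₀m
          · by_cases e2 : i' = i₀
            · rw [e2, hs, Equiv.swap_apply_right]
              exact j'.isLt
            · rw [hs, Equiv.swap_apply_of_ne_of_ne e1 e2]
              exact hi'
        rw [hEvec, hPx i hij', hPx m' (by rw [hm']; exact j'.isLt)]
        simp
      · rw [hEvec]
        have hmi : m < (i : ℕ) := by simpa using hij
        rw [if_pos hmi, ← hν]
        have : ν i / ν m' * ν m' = ν i := div_mul_cancel₀ _ hνne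
        rw [neg_mul, this]
        ring
open scoped Pointwise

lemma pPart_mem (n : ℕ) (g : GL (Fin n) ℂ) (a : Fin n) :
    glAct n g (pVar n a) ∈ Submodule.span ℂ (Set.range (pVar n)) := by
  rw [glAct_pVar]
  refine Submodule.sum_mem _ fun i _ => ?_
  rw [C_mul']
  exact Submodule.smul_mem _ _ (Submodule.subset_span ⟨i, rfl⟩)

lemma qLin_mem (n : ℕ) (j : ℕ) (μ : Fin n → ℂ) (hμ : ∀ i : Fin n, j < (i:ℕ) → μ i = 0) :
    qLin n μ ∈ Submodule.span ℂ {x : Poly n | ∃ l : Fin n, (l:ℕ) ≤ j ∧ x = qVar n l} := by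
  rw [qLin]
  refine Submodule.sum_mem _ fun i _ => ?_
  rcases le_or_gt (i:ℕ) j with h | h
  · rw [C_mul']
    exact Submodule.smul_mem _ _ (Submodule.subset_span ⟨i, h, rfl⟩)
  · rw [hμ i h]
    simp

lemma squares_mem (n m : ℕ) (a : Fin m → Fin n) (lam : Fin m → Fin n → ℂ) :
    wedgeOf (fun j : Fin m => pVar n (a j) * (qLin n (lam j))^2) ∈
      Submodule.span ℂ (genSet n m) := by
  obtain ⟨h, hh⟩ := exists_flag_matrix n m lam
  have hgval : ((h⁻¹ : GL (Fin n) ℂ) : Matrix (Fin n) (Fin n) ℂ).transpose *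
      ((h : Matrix (Fin n) (Fin n) ℂ)).transpose = 1 := by
    rw [← Matrix.transpose_mul, ← Units.val_mul, mul_inv_cancel, Units.val_one,
      Matrix.transpose_one]
  have hgval2 : ((h : Matrix (Fin n) (Fin n) ℂ)).transpose *
      ((h⁻¹ : GL (Fin n) ℂ) : Matrix (Fin n) (Fin n) ℂ).transpose = 1 := by
    rw [← Matrix.transpose_mul, ← Units.val_mul, inv_mul_cancel, Units.val_one,
      Matrix.transpose_one]
  set g : GL (Fin n) ℂ := ⟨((h⁻¹ : GL (Fin n) ℂ) : Matrix (Fin n) (Fin n) ℂ).transpose,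
    ((h : Matrix (Fin n) (Fin n) ℂ)).transpose, hgval, hgval2⟩ with hgdef
  have hginv : ((g⁻¹ : GL (Fin n) ℂ) : Matrix (Fin n) (Fin n) ℂ)
      = ((h : Matrix (Fin n) (Fin n) ℂ)).transpose := rfl
  set w' : Fin m → Poly n := fun j => glAct n g⁻¹ (pVar n (a j) * (qLin n (lam j))^2)
    with hw'def
  have hw' : ∀ j : Fin m, w' j ∈ Submodule.span ℂ (flagMon n (j:ℕ)) := by
    intro j
    have hq : glAct n g⁻¹ (qLin n (lam j)) ∈
        Submodule.span ℂ {x : Poly n | ∃ l : Fin n, (l:ℕ) ≤ (j:ℕ) ∧ x = qVar n l} := by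
      rw [glAct_qLin, hginv, Matrix.vecMul_transpose]
      exact qLin_mem n j _ (fun i hi => hh j i hi)
    have hp := pPart_mem n g⁻¹ (a j)
    have hmul := Submodule.mul_mem_mul (Submodule.mul_mem_mul hp hq) hq
    rw [Submodule.span_mul_span, Submodule.span_mul_span] at hmul
    have hsub : Set.range (pVar n) * {x : Poly n | ∃ l : Fin n, (l:ℕ) ≤ (j:ℕ) ∧ x = qVar n l}
        * {x : Poly n | ∃ l : Fin n, (l:ℕ) ≤ (j:ℕ) ∧ x = qVar n l} ⊆ flagMon n (j:ℕ) := by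
      rintro x hx
      rw [Set.mem_mul] at hx
      obtain ⟨y, hy, z, hz, rfl⟩ := hx
      rw [Set.mem_mul] at hy
      obtain ⟨p, hp', q1, hq1, rfl⟩ := hy
      obtain ⟨α, rfl⟩ := hp'
      obtain ⟨β, hβ, rfl⟩ := hq1
      obtain ⟨γ, hγ, rfl⟩ := hz
      exact ⟨α, β, γ, hβ, hγ, rfl⟩
    have hfin := Submodule.span_mono hsub hmul
    show glAct n g⁻¹ (pVar n (a j) * (qLin n (lam j))^2) ∈ _
    rw [map_mul, map_pow, sq, ← mul_assoc]
    exact hfin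
  have hcast : (fun j : Fin m => pVar n (a j) * (qLin n (lam j))^2)
      = fun j => glAct n g (w' j) := by
    funext j
    rw [hw'def, glAct_comp_inv]
  rw [hcast]
  have hv2 : ∀ j : Fin m, glAct n g (w' j) ∈
      Submodule.span ℂ ((glAct n g) '' flagMon n (j:ℕ)) := by
    intro j
    have h2 := Submodule.mem_map_of_mem (f := (glAct n g).toLinearMap) (hw' j)
    rwa [Submodule.map_span] at h2
  have hspan := wedge_mem_span m (fun j => (glAct n g) '' flagMon n (j:ℕ))
    (fun j => glAct n g (w' j)) hv2
  refine Submodule.span_mono ?_ hspan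
  rintro x ⟨u, hu, rfl⟩
  simp only [Set.mem_image] at hu
  choose w hwmem hweq using hu
  exact ⟨g, w, hwmem, congrArg wedgeOf (funext fun j => (hweq j).symm)⟩

end Aux

theorem statement10 (n m : ℕ) (v : Fin m → Poly n)
    (hv : ∀ j, ∃ α β γ : Fin n, v j = pVar n α * qVar n β * qVar n γ) :
    ∃ (N : ℕ) (c : Fin N → ℂ) (g : Fin N → GL (Fin n) ℂ) (w : Fin N → Fin m → Poly n),
      (∀ s j, ∃ α β γ : Fin n, w s j = pVar n α * qVar n β * qVar n γ) ∧
      (∀ s (j : Fin m), ∀ mo ∈ (w s j).support, ∀ l : Fin n,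
          mo (qIdx n l) ≠ 0 → l.1 ≤ j.1) ∧
      wedgeOf v = ∑ s, c s • wedgeOf (fun j => glAct n (g s) (w s j)) := by
  classical
  have hgen : ∀ δ : Fin n, qLin n (fun k => if k = δ then (1:ℂ) else 0) = qVar n δ := by
    intro δ
    rw [qLin]
    simp [apply_ite C, ite_mul, Finset.sum_ite_eq']
  have hvT : ∀ j, v j ∈ Submodule.span ℂ
      {x : Poly n | ∃ (α : Fin n) (lm : Fin n → ℂ), x = pVar n α * (qLin n lm)^2} := by
    intro j
    obtain ⟨α, β, γ, hj⟩ := hv j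
    have hbc : qLin n (fun k => (if k = β then (1:ℂ) else 0) + (if k = γ then (1:ℂ) else 0))
        = qVar n β + qVar n γ := by
      rw [qLin]
      simp only [map_add, add_mul, Finset.sum_add_distrib]
      rw [← qLin, ← qLin, hgen, hgen]
    have h1 : pVar n α * (qVar n β + qVar n γ)^2 ∈
        {x : Poly n | ∃ (α : Fin n) (lm : Fin n → ℂ), x = pVar n α * (qLin n lm)^2} :=
      ⟨α, _, by rw [hbc]⟩
    have h2 : pVar n α * (qVar n β)^2 ∈
        {x : Poly n | ∃ (α : Fin n) (lm : Fin n → ℂ), x = pVar n α * (qLin n lm)^2} :=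
      ⟨α, _, by rw [hgen β]⟩
    have h3 : pVar n α * (qVar n γ)^2 ∈
        {x : Poly n | ∃ (α : Fin n) (lm : Fin n → ℂ), x = pVar n α * (qLin n lm)^2} :=
      ⟨α, _, by rw [hgen γ]⟩
    have key : (2:ℂ) • (pVar n α * qVar n β * qVar n γ)
        = pVar n α * (qVar n β + qVar n γ)^2 - pVar n α * (qVar n β)^2
          - pVar n α * (qVar n γ)^2 := by
      rw [two_smul]
      ring
    have hvj : v j = (2⁻¹:ℂ) • (pVar n α * (qVar n β + qVar n γ)^2
        - pVar n α * (qVar n β)^2 - pVar n α * (qVar n γ)^2) := by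
      rw [hj, ← key, smul_smul]
      norm_num
    rw [hvj]
    exact Submodule.smul_mem _ _ (Submodule.sub_mem _
      (Submodule.sub_mem _ (Submodule.subset_span h1) (Submodule.subset_span h2))
      (Submodule.subset_span h3))
  have h1 := wedge_mem_span m _ v hvT
  have h2 : {x : ExteriorAlgebra ℂ (Poly n) | ∃ u : Fin m → Poly n,
      (∀ j, u j ∈ {x : Poly n | ∃ (α : Fin n) (lm : Fin n → ℂ),
        x = pVar n α * (qLin n lm)^2}) ∧ x = wedgeOf u}
      ⊆ ↑(Submodule.span ℂ (genSet n m)) := by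
    rintro x ⟨u, hu, rfl⟩
    choose a lm hu' using hu
    rw [show u = fun j => pVar n (a j) * (qLin n (lm j))^2 from funext hu']
    exact squares_mem n m a lm
  have h3 : wedgeOf v ∈ Submodule.span ℂ (genSet n m) :=
    Submodule.span_le.mpr h2 h1
  rw [Submodule.mem_span_set'] at h3
  obtain ⟨N, c, gens, hsum⟩ := h3
  have hprop : ∀ s : Fin N, ∃ (g : GL (Fin n) ℂ) (w : Fin m → Poly n),
      (∀ j : Fin m, w j ∈ flagMon n (j:ℕ)) ∧
      (gens s : ExteriorAlgebra ℂ (Poly n)) = wedgeOf (fun j => glAct n g (w j)) :=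
    fun s => (gens s).2
  choose gg ww hflag heq using hprop
  refine ⟨N, c, gg, ww, ?_, ?_, ?_⟩
  · intro s j
    obtain ⟨α, β, γ, _, _, hx⟩ := hflag s j
    exact ⟨α, β, γ, hx⟩
  · intro s j mo hmo l hl
    obtain ⟨α, β, γ, hβ, hγ, hx⟩ := hflag s j
    rw [hx] at hmo
    rcases support_pqq n α β γ mo hmo l hl with rfl | rfl
    · exact hβ
    · exact hγ
  · rw [← hsum]
    exact Finset.sum_congr rfl fun s _ => by rw [heq s]

end Paper
end
end

section
/- For every integer j ≥ 2, the periodic Bernoulli function b_j equals (−1)^{j+1} j! times the j-fold convolution power of b_1 on the circle R/Z: b_j(x) = (−1)^{j+1} j! (b_1 * b_1 * … * b_1)(x) (j factors) for all x ∈ R. -/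
open MvPolynomial MeasureTheory Finset

noncomputable section

namespace Paper

/-! ## Statements 13, 14: Bernoulli functions -/

/-- The periodic Bernoulli function `b_j`. -/
def bper (j : ℕ) (x : ℝ) : ℝ := Polynomial.aeval (Int.fract x) (Polynomial.bernoulli j)

/-- Convolution on the circle `ℝ/ℤ`. -/
def circConv (f g : ℝ → ℝ) : ℝ → ℝ := fun x => ∫ t in (0:ℝ)..1, f (x - t) * g t

/-- `convIter f m` is the `(m+1)`-fold convolution power of `f`. -/
def convIter (f : ℝ → ℝ) : ℕ → (ℝ → ℝ)
  | 0 => f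
  | (m+1) => circConv (convIter f m) f

open intervalIntegral MeasureTheory

lemma bper_eq (j : ℕ) (x : ℝ) : bper j x = bernoulliFun j (Int.fract x) := by
  rw [bper, bernoulliFun, Polynomial.aeval_def, Polynomial.eval₂_eq_eval_map]

lemma continuous_bernoulliFun (k : ℕ) : Continuous (bernoulliFun k) := by
  unfold bernoulliFun
  exact Polynomial.continuous _

lemma conv_core (m : ℕ) (hm : 1 ≤ m) (y : ℝ) (hy0 : 0 ≤ y) (hy1 : y < 1) :
    (∫ t in (0:ℝ)..1, bper m (y - t) * b1R t) = -(bernoulliFun (m+1) y) / (m+1) := by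
  set f : ℝ → ℝ := fun t => bper m (y - t) * b1R t with hf
  set g1 : ℝ → ℝ := fun t => bernoulliFun m (y - t) * (t - 1/2) with hg1
  set g2 : ℝ → ℝ := fun t => bernoulliFun m (y - t + 1) * (t - 1/2) with hg2
  have hc1 : Continuous g1 :=
    ((continuous_bernoulliFun m).comp (continuous_const.sub continuous_id)).mul
      (continuous_id.sub continuous_const)
  have hc2 : Continuous g2 :=
    ((continuous_bernoulliFun m).comp ((continuous_const.sub continuous_id).add
      continuous_const)).mul (continuous_id.sub continuous_const)
  -- equality on pieces
  have e1 : Set.EqOn f g1 (Set.Icc 0 y) := by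
    intro t ht
    rw [Set.mem_Icc] at ht
    obtain ⟨ht1, ht2⟩ := ht
    have h1 : Int.fract t = t := Int.fract_eq_self.2 ⟨ht1, lt_of_le_of_lt ht2 hy1⟩
    have h2 : Int.fract (y - t) = y - t := Int.fract_eq_self.2 ⟨by linarith, by linarith⟩
    simp [hf, hg1, bper_eq, b1R, h1, h2]
  have e2 : ∀ t ∈ Set.Ioo y 1, f t = g2 t := by
    intro t ht
    rw [Set.mem_Ioo] at ht
    obtain ⟨ht1, ht2⟩ := ht
    have h1 : Int.fract t = t := Int.fract_eq_self.2 ⟨by linarith, ht2⟩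
    have h2 : Int.fract (y - t) = y - t + 1 := by
      have h3 := Int.fract_add_intCast (y - t) 1
      push_cast at h3
      rw [← h3]
      exact Int.fract_eq_self.2 ⟨by linarith, by linarith⟩
    simp [hf, hg2, bper_eq, b1R, h1, h2]
  -- derivatives
  have hd1 : ∀ c t : ℝ, HasDerivAt (fun t : ℝ => bernoulliFun (m+1) (c - t))
      (-((m+1 : ℝ) * bernoulliFun m (c - t))) t := by
    intro c t
    have := (hasDerivAt_bernoulliFun (m+1) (c - t)).comp t ((hasDerivAt_id t).const_sub c)
    simpa [Nat.add_sub_cancel, Function.comp_def] using this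
  have hd2 : ∀ c t : ℝ, HasDerivAt (fun t : ℝ => bernoulliFun (m+2) (c - t))
      (-((m+2 : ℝ) * bernoulliFun (m+1) (c - t))) t := by
    intro c t
    have := (hasDerivAt_bernoulliFun (m+2) (c - t)).comp t ((hasDerivAt_id t).const_sub c)
    simpa [Nat.add_sub_cancel, show m + 2 - 1 = m + 1 from rfl, Function.comp_def] using this
  have hd1' : ∀ t : ℝ, HasDerivAt (fun t : ℝ => bernoulliFun (m+1) (y - t + 1))
      (-((m+1 : ℝ) * bernoulliFun m (y - t + 1))) t := by
    intro t
    have := (hasDerivAt_bernoulliFun (m+1) (y - t + 1)).comp t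
      (((hasDerivAt_id t).const_sub y).add_const 1)
    simpa [Nat.add_sub_cancel, Function.comp_def] using this
  have hd2' : ∀ t : ℝ, HasDerivAt (fun t : ℝ => bernoulliFun (m+2) (y - t + 1))
      (-((m+2 : ℝ) * bernoulliFun (m+1) (y - t + 1))) t := by
    intro t
    have := (hasDerivAt_bernoulliFun (m+2) (y - t + 1)).comp t
      (((hasDerivAt_id t).const_sub y).add_const 1)
    simpa [Nat.add_sub_cancel, show m + 2 - 1 = m + 1 from rfl, Function.comp_def] using this
  have hm1 : (m + 1 : ℝ) ≠ 0 := by positivity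
  have hm2 : (m + 2 : ℝ) ≠ 0 := by positivity
  set G1 : ℝ → ℝ := fun t => -(bernoulliFun (m+1) (y - t) * (t - 1/2)) / (m+1)
      - bernoulliFun (m+2) (y - t) / ((m+1) * (m+2)) with hG1
  set G2 : ℝ → ℝ := fun t => -(bernoulliFun (m+1) (y - t + 1) * (t - 1/2)) / (m+1)
      - bernoulliFun (m+2) (y - t + 1) / ((m+1) * (m+2)) with hG2
  have hG1d : ∀ t, HasDerivAt G1 (g1 t) t := by
    intro t
    have h := (((hd1 y t).mul ((hasDerivAt_id t).sub_const (1/2))).neg.div_const ((m:ℝ)+1)).sub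
      ((hd2 y t).div_const (((m:ℝ)+1) * ((m:ℝ)+2)))
    refine HasDerivAt.congr_deriv (f := G1) h ?_
    simp only [hg1, id]
    field_simp
    ring
  have hG2d : ∀ t, HasDerivAt G2 (g2 t) t := by
    intro t
    have h := (((hd1' t).mul ((hasDerivAt_id t).sub_const (1/2))).neg.div_const ((m:ℝ)+1)).sub
      ((hd2' t).div_const (((m:ℝ)+1) * ((m:ℝ)+2)))
    refine HasDerivAt.congr_deriv (f := G2) h ?_
    simp only [hg2, id]
    field_simp
    ring
  -- integrability
  have hic1 : IntervalIntegrable f volume 0 y := by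
    rw [intervalIntegrable_iff, Set.uIoc_of_le hy0]
    exact (hc1.integrableOn_Ioc).congr_fun
      (fun t ht => (e1 ⟨le_of_lt ht.1, ht.2⟩).symm) measurableSet_Ioc
  have hae : ∀ᵐ t : ℝ, t ≠ 1 := by
    rw [MeasureTheory.ae_iff]
    simpa using Real.volume_singleton (a := 1)
  have hic2 : IntervalIntegrable f volume y 1 := by
    rw [intervalIntegrable_iff, Set.uIoc_of_le (le_of_lt hy1)]
    refine (hc2.integrableOn_Ioc).congr_fun_ae ?_
    filter_upwards [ae_restrict_mem measurableSet_Ioc, ae_restrict_of_ae hae] with t ht hne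
    exact (e2 t ⟨ht.1, lt_of_le_of_ne ht.2 hne⟩).symm
  rw [← intervalIntegral.integral_add_adjacent_intervals hic1 hic2]
  have I1 : (∫ t in (0:ℝ)..y, f t) = G1 y - G1 0 := by
    rw [intervalIntegral.integral_congr (g := g1)
      (fun t ht => e1 (by rwa [Set.uIcc_of_le hy0] at ht))]
    exact intervalIntegral.integral_eq_sub_of_hasDerivAt (fun t _ => hG1d t)
      (hc1.intervalIntegrable 0 y)
  have I2 : (∫ t in y..(1:ℝ), f t) = G2 1 - G2 y := by
    rw [intervalIntegral.integral_congr_ae (g := g2) ?_]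
    · exact intervalIntegral.integral_eq_sub_of_hasDerivAt (fun t _ => hG2d t)
        (hc2.intervalIntegrable y 1)
    · filter_upwards [hae] with t hne ht
      rw [Set.uIoc_of_le (le_of_lt hy1)] at ht
      exact e2 t ⟨ht.1, lt_of_le_of_ne ht.2 hne⟩
  rw [I1, I2, hG1, hG2]
  have hb1e : bernoulliFun (m+1) 1 = bernoulliFun (m+1) 0 :=
    bernoulliFun_endpoints_eq_of_ne_one (by omega)
  have hb2e : bernoulliFun (m+2) 1 = bernoulliFun (m+2) 0 :=
    bernoulliFun_endpoints_eq_of_ne_one (by omega)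
  simp only [sub_self, sub_zero, sub_add_cancel, zero_add]
  rw [hb1e, hb2e]
  field_simp
  ring

lemma conv_step (m : ℕ) (hm : 1 ≤ m) (x : ℝ) :
    circConv (bper m) b1R x = -(bper (m+1) x) / (m+1) := by
  have key : ∀ t : ℝ, bper m (x - t) = bper m (Int.fract x - t) := by
    intro t
    rw [bper_eq, bper_eq]
    congr 1
    conv_lhs => rw [show x - t = Int.fract x - t + ⌊x⌋ from by rw [Int.fract]; ring]
    rw [Int.fract_add_intCast]
  rw [circConv]
  simp only [key]
  rw [conv_core m hm (Int.fract x) (Int.fract_nonneg x) (Int.fract_lt_one x), bper_eq]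

lemma b1R_eq_bper : b1R = bper 1 := by
  funext x
  rw [b1R, bper_eq]
  simp [bernoulliFun, Polynomial.bernoulli, Finset.sum_range_succ, bernoulli_zero, bernoulli_one]
  ring

lemma main_aux (m : ℕ) (x : ℝ) :
    bper (m+2) x = (-1:ℝ)^(m+1) * ((m+2).factorial : ℝ) * convIter b1R (m+1) x := by
  induction m generalizing x with
  | zero =>
      have h := conv_step 1 le_rfl x
      have e : convIter b1R 1 = circConv (bper 1) b1R := by
        show circConv b1R b1R = _
        rw [b1R_eq_bper]
      rw [e, h]
      norm_num [Nat.factorial]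
      ring
  | succ k ih =>
      have h := conv_step (k+2) (by omega) x
      have hc : circConv (bper (k+2)) b1R x
          = (-1:ℝ)^(k+1) * ((k+2).factorial : ℝ) * convIter b1R (k+2) x := by
        rw [circConv, show convIter b1R (k+2) = circConv (convIter b1R (k+1)) b1R from rfl,
          circConv]
        rw [show (∫ t in (0:ℝ)..1, bper (k+2) (x - t) * b1R t)
            = ∫ t in (0:ℝ)..1, (-1:ℝ)^(k+1) * ((k+2).factorial : ℝ)
              * (convIter b1R (k+1) (x - t) * b1R t) from by
          congr 1; funext t; rw [ih]; ring]
        rw [intervalIntegral.integral_const_mul]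
      rw [hc] at h
      have hne : ((k:ℝ) + 2 + 1) ≠ 0 := by positivity
      have : bper (k + 2 + 1) x = -(((k:ℝ)+2+1) * ((-1:ℝ)^(k+1) * ((k+2).factorial : ℝ)
          * convIter b1R (k+2) x)) := by
        field_simp at h
        push_cast at h ⊢
        linarith [h]
      show bper (k+2+1) x = (-1:ℝ)^(k+2) * (((k+2+1).factorial : ℕ) : ℝ) * convIter b1R (k+2) x
      rw [this, show (((k+2+1).factorial : ℕ) : ℝ) = ((k:ℝ)+3) * (((k+2).factorial : ℕ) : ℝ)
        from by rw [Nat.factorial_succ]; push_cast; ring]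
      push_cast
      ring

theorem statement13 (j : ℕ) (hj : 2 ≤ j) (x : ℝ) :
    bper j x = (-1:ℝ)^(j+1) * (j.factorial : ℝ) * convIter b1R (j-1) x := by
  obtain ⟨m, rfl⟩ : ∃ m, j = m + 2 := ⟨j - 2, by omega⟩
  rw [show m + 2 - 1 = m + 1 from rfl, main_aux m x]
  rw [show m + 2 + 1 = (m + 1) + 2 from rfl, pow_add]
  ring

end Paper
end
end

section
/- For every integer l ≥ 2, ∫_{[0,1]^l} b_1(u_1 − u_2) b_1(u_2 − u_3) ⋯ b_1(u_{l−1} − u_l) b_1(u_l − u_1) du_1 ⋯ du_l = −B_l / l!, where B_l = B_l(0) is the l-th Bernoulli number. (For odd l ≥ 3 both sides are 0.) -/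
open MvPolynomial MeasureTheory Finset

noncomputable section

namespace Paper

section Aux14
open Set intervalIntegral

def cB (m : ℕ) (x : ℝ) : ℝ := bernoulliFun m (Int.fract x)

lemma cB_one (x : ℝ) : cB 1 x = b1R x := by
  simp [cB, b1R, bernoulliFun, Polynomial.bernoulli, Finset.sum_range_succ]
  norm_num [bernoulli_zero, bernoulli_one]
  ring

lemma b1R_int_add (x : ℝ) (n : ℤ) : b1R (x + n) = b1R x := by
  simp [b1R, Int.fract_add_intCast]

lemma b1R_periodic : Function.Periodic b1R 1 := fun x => by
  simpa using b1R_int_add x 1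

lemma cB_periodic (m : ℕ) : Function.Periodic (cB m) 1 := fun x => by
  simp [cB, Int.fract_add_one]

lemma measurable_b1R : Measurable b1R := measurable_fract.sub measurable_const

lemma measurable_cB (m : ℕ) : Measurable (cB m) :=
  ((Polynomial.map (algebraMap ℚ ℝ) (Polynomial.bernoulli m)).continuous_aeval).measurable.comp
    measurable_fract

lemma abs_b1R_le (x : ℝ) : |b1R x| ≤ 1 := by
  have h1 := Int.fract_nonneg x
  have h2 := Int.fract_lt_one x
  rw [b1R, abs_le]; constructor <;> linarith

lemma cB_bound (m : ℕ) : ∃ C : ℝ, ∀ x, |cB m x| ≤ C := by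
  obtain ⟨C, hC⟩ := (isCompact_Icc (a := (0:ℝ)) (b := 1)).exists_bound_of_continuousOn
    (Polynomial.continuous (Polynomial.map (algebraMap ℚ ℝ) (Polynomial.bernoulli m))).continuousOn
  exact ⟨C, fun x => by
    simpa [cB, bernoulliFun] using hC (Int.fract x)
      ⟨Int.fract_nonneg x, (Int.fract_lt_one x).le⟩⟩

lemma intervalIntegrable_of_bdd {f : ℝ → ℝ} (hm : Measurable f) {C : ℝ}
    (hb : ∀ x, |f x| ≤ C) (a b : ℝ) : IntervalIntegrable f volume a b := by
  rw [intervalIntegrable_iff]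
  refine Integrable.mono' (g := fun _ => C) (integrableOn_const (hs := measure_Ioc_lt_top.ne))
    hm.aestronglyMeasurable (ae_of_all _ fun x => ?_)
  simpa using hb x

lemma integral_bern (m : ℕ) (a b : ℝ) :
    ∫ t in a..b, bernoulliFun m t
      = (bernoulliFun (m+1) b - bernoulliFun (m+1) a) / (m+1) := by
  rw [integral_eq_sub_of_hasDerivAt (fun x _ => antideriv_bernoulliFun m x)
    ((Polynomial.continuous _).intervalIntegrable _ _)]
  ring

lemma hasDerivAt_F (m : ℕ) (t : ℝ) :
    HasDerivAt (fun t => t * bernoulliFun (m+1) t / (m+1)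
      - bernoulliFun (m+2) t / ((m+1)*(m+2))) (t * bernoulliFun m t) t := by
  have h1 : HasDerivAt (fun t : ℝ => t * bernoulliFun (m+1) t / (m+1))
      ((1 * bernoulliFun (m+1) t + t * ((m+1) * bernoulliFun m t)) / (m+1)) t := by
    have := ((hasDerivAt_id t).mul (hasDerivAt_bernoulliFun (m+1) t)).div_const ((m:ℝ)+1)
    simpa using this
  have h2 : HasDerivAt (fun t : ℝ => bernoulliFun (m+2) t / ((m+1)*(m+2)))
      (((m+2) * bernoulliFun (m+1) t) / ((m+1)*(m+2))) t := by
    have := (hasDerivAt_bernoulliFun (m+2) t).div_const (((m:ℝ)+1)*((m:ℝ)+2))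
    simpa using this
  have := h1.sub h2
  refine this.congr_deriv ?_
  have hm1 : ((m:ℝ)+1) ≠ 0 := by positivity
  have hm2 : ((m:ℝ)+2) ≠ 0 := by positivity
  field_simp
  ring

lemma integral_mul_bern (m : ℕ) (a b : ℝ) :
    ∫ t in a..b, t * bernoulliFun m t
      = (b * bernoulliFun (m+1) b / (m+1) - bernoulliFun (m+2) b / ((m+1)*(m+2)))
        - (a * bernoulliFun (m+1) a / (m+1) - bernoulliFun (m+2) a / ((m+1)*(m+2))) := by
  rw [integral_eq_sub_of_hasDerivAt (fun x _ => hasDerivAt_F m x)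
    ((continuous_id.mul (Polynomial.continuous _)).intervalIntegrable _ _)]


lemma iint_prod (m : ℕ) (z : ℝ) :
    ∀ a b : ℝ, IntervalIntegrable (fun t => b1R (z - t) * cB m t) volume a b := by
  obtain ⟨C, hC⟩ := cB_bound m
  intro a b
  refine intervalIntegrable_of_bdd
    ((measurable_b1R.comp (measurable_const.sub measurable_id)).mul (measurable_cB m))
    (C := 1 * |C|) (fun x => ?_) a b
  show |b1R (z - x) * cB m x| ≤ 1 * |C|
  rw [abs_mul]
  have h0 : (0:ℝ) ≤ |cB m x| := abs_nonneg _
  exact mul_le_mul (abs_b1R_le _) ((hC x).trans (le_abs_self C)) h0 zero_le_one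

lemma fract_eq_add_one {w : ℝ} (h1 : -1 ≤ w) (h2 : w < 0) : Int.fract w = w + 1 := by
  have : Int.fract (w + 1) = w + 1 := Int.fract_eq_self.mpr ⟨by linarith, by linarith⟩
  rwa [Int.fract_add_one] at this

lemma key₀ (m : ℕ) (hm : 1 ≤ m) {z : ℝ} (hz0 : 0 ≤ z) (hz1 : z < 1) :
    ∫ t in (0:ℝ)..1, b1R (z - t) * cB m t = -(bernoulliFun (m+1) z) / (m+1) := by
  have hsplit := integral_add_adjacent_intervals (iint_prod m z 0 z) (iint_prod m z z 1)
  rw [← hsplit]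
  have h1 : ∫ t in (0:ℝ)..z, b1R (z - t) * cB m t
      = ∫ t in (0:ℝ)..z, (z - 1/2) * bernoulliFun m t - t * bernoulliFun m t := by
    refine integral_congr fun t ht => ?_
    rw [uIcc_of_le hz0] at ht
    obtain ⟨ht0, htz⟩ := ht
    have hf1 : Int.fract (z - t) = z - t :=
      Int.fract_eq_self.mpr ⟨by linarith, by linarith⟩
    have hf2 : Int.fract t = t := Int.fract_eq_self.mpr ⟨ht0, by linarith⟩
    simp only [b1R, cB, bernoulliFun, hf1, hf2]
    ring
  have h2 : ∫ t in z..(1:ℝ), b1R (z - t) * cB m t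
      = ∫ t in z..(1:ℝ), (z + 1/2) * bernoulliFun m t - t * bernoulliFun m t := by
    refine integral_congr_ae ?_
    have hne : ∀ᵐ t : ℝ, t ∉ ({1} : Set ℝ) :=
      measure_eq_zero_iff_ae_notMem.mp (measure_singleton 1)
    filter_upwards [hne] with t ht hmem
    rw [uIoc_of_le hz1.le] at hmem
    simp only [Set.mem_singleton_iff] at ht
    obtain ⟨htz', ht1⟩ := hmem
    have ht1' : t < 1 := lt_of_le_of_ne ht1 ht
    have hf1 : Int.fract (z - t) = z - t + 1 := fract_eq_add_one (by linarith) (by linarith)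
    have hf2 : Int.fract t = t := Int.fract_eq_self.mpr ⟨by linarith, ht1'⟩
    simp only [b1R, cB, bernoulliFun, hf1, hf2]
    ring
  rw [h1, h2]
  have hBint : ∀ a b : ℝ, IntervalIntegrable (fun t => bernoulliFun m t) volume a b :=
    fun a b => (Polynomial.continuous _).intervalIntegrable a b
  have htBint : ∀ a b : ℝ, IntervalIntegrable (fun t => t * bernoulliFun m t) volume a b :=
    fun a b => (continuous_id.mul (Polynomial.continuous _)).intervalIntegrable a b
  rw [integral_sub (((hBint 0 z).const_mul _)) (htBint 0 z),
      integral_sub (((hBint z 1).const_mul _)) (htBint z 1),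
      intervalIntegral.integral_const_mul, intervalIntegral.integral_const_mul, integral_bern, integral_bern,
      integral_mul_bern, integral_mul_bern]
  have e1 : bernoulliFun (m+1) 1 = bernoulliFun (m+1) 0 :=
    bernoulliFun_endpoints_eq_of_ne_one (by omega)
  have e2 : bernoulliFun (m+2) 1 = bernoulliFun (m+2) 0 :=
    bernoulliFun_endpoints_eq_of_ne_one (by omega)
  rw [e1, e2]
  have hm1 : ((m:ℝ)+1) ≠ 0 := by positivity
  have hm2 : ((m:ℝ)+2) ≠ 0 := by positivity
  push_cast
  field_simp
  ring

lemma key (m : ℕ) (hm : 1 ≤ m) (x y : ℝ) :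
    ∫ t in (0:ℝ)..1, b1R (x - t) * cB m (t - y)
      = -(((m:ℝ)+1))⁻¹ * cB (m+1) (x - y) := by
  set f : ℝ → ℝ := fun s => b1R (x - y - s) * cB m s with hf
  have hper : Function.Periodic f 1 := by
    intro s
    simp only [hf]
    have : x - y - (s + 1) = (x - y - s) - 1 := by ring
    rw [this, b1R_periodic.sub_eq, cB_periodic m s]
  have step1 : ∫ t in (0:ℝ)..1, b1R (x - t) * cB m (t - y)
      = ∫ s in (0:ℝ)..1, f s := by
    have hcomp : (fun t => b1R (x - t) * cB m (t - y)) = fun t => f (t - y) := by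
      funext t
      simp only [hf]
      congr 2
      ring
    rw [hcomp, integral_comp_sub_right f y]
    have h := hper.intervalIntegral_add_eq (-y) 0
    have e1 : (1:ℝ) - y = -y + 1 := by ring
    rw [e1]
    simpa using h
  rw [step1]
  have step2 : ∫ s in (0:ℝ)..1, f s
      = ∫ s in (0:ℝ)..1, b1R (Int.fract (x - y) - s) * cB m s := by
    refine integral_congr fun s _ => ?_
    simp only [hf]
    congr 1
    have : x - y - s = (Int.fract (x - y) - s) + (⌊x - y⌋ : ℤ) := by
      have hfl := Int.fract_add_floor (x - y)
      linarith
    rw [this, b1R_int_add]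
  rw [step2, key₀ m hm (Int.fract_nonneg _) (Int.fract_lt_one _)]
  simp only [cB]
  field_simp


/-! ### Multidimensional part -/

def chainF : (m : ℕ) → ℝ → ℝ → (Fin m → ℝ) → ℝ
  | 0, x, y, _ => b1R (x - y)
  | (m+1), x, y, u => b1R (x - u 0) * chainF m (u 0) y (Fin.tail u)

lemma abs_chainF_le : ∀ (m : ℕ) (x y : ℝ) (u : Fin m → ℝ), |chainF m x y u| ≤ 1
  | 0, x, y, u => abs_b1R_le _
  | (m+1), x, y, u => by
    rw [chainF, abs_mul]
    have h1 := abs_b1R_le (x - u 0)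
    have h2 := abs_chainF_le m (u 0) y (Fin.tail u)
    have h3 : (0:ℝ) ≤ |chainF m (u 0) y (Fin.tail u)| := abs_nonneg _
    nlinarith [abs_nonneg (b1R (x - u 0))]

lemma measurable_chainF : ∀ m : ℕ,
    Measurable (fun p : (ℝ × ℝ) × (Fin m → ℝ) => chainF m p.1.1 p.1.2 p.2)
  | 0 => measurable_b1R.comp
      ((measurable_fst.comp measurable_fst).sub (measurable_snd.comp measurable_fst))
  | (m+1) => by
    have IH := measurable_chainF m
    show Measurable (fun p : (ℝ × ℝ) × (Fin (m+1) → ℝ) =>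
      b1R (p.1.1 - p.2 0) * chainF m (p.2 0) p.1.2 (Fin.tail p.2))
    refine Measurable.mul ?_ ?_
    · exact measurable_b1R.comp ((measurable_fst.comp measurable_fst).sub
        ((measurable_pi_apply 0).comp measurable_snd))
    · refine IH.comp (Measurable.prodMk (Measurable.prodMk ?_ ?_) ?_)
      · exact (measurable_pi_apply 0).comp measurable_snd
      · exact measurable_snd.comp measurable_fst
      · exact measurable_pi_iff.mpr fun j => (measurable_pi_apply j.succ).comp measurable_snd

lemma snoc_zero' {n : ℕ} (u : Fin (n+1) → ℝ) (y : ℝ) :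
    (Fin.snoc u y : Fin (n+2) → ℝ) 0 = u 0 :=
  Fin.snoc_castSucc (α := fun _ => ℝ) (p := u) (x := y) (i := 0)
lemma cons_snoc_succ (m : ℕ) (x y : ℝ) (u : Fin (m+1) → ℝ) (j : Fin (m+2)) :
    (Fin.cons x (Fin.snoc u y) : Fin (m+3) → ℝ) j.succ
      = (Fin.cons (u 0) (Fin.snoc (Fin.tail u) y) : Fin (m+2) → ℝ) j := by
  refine Fin.cases ?_ (fun k => ?_) j
  · simp [snoc_zero']
  · simp only [Fin.cons_succ]
    refine Fin.lastCases ?_ (fun k' => ?_) k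
    · simp [Fin.succ_last]
    · simp [Fin.tail]
      rw [Fin.succ_castSucc, Fin.snoc_castSucc]

lemma chainF_eq_prod : ∀ (m : ℕ) (x y : ℝ) (u : Fin m → ℝ),
    chainF m x y u = ∏ i : Fin (m+1),
      b1R ((Fin.cons x (Fin.snoc u y) : Fin (m+2) → ℝ) i.castSucc
        - (Fin.cons x (Fin.snoc u y) : Fin (m+2) → ℝ) i.succ)
  | 0, x, y, u => by
    simp only [Fin.prod_univ_succ, Fin.prod_univ_zero, mul_one, Fin.castSucc_zero,
      Fin.cons_zero, chainF, Fin.cons_succ]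
    rw [show ((0:Fin 1)) = Fin.last 0 from rfl, Fin.snoc_last]
  | (m+1), x, y, u => by
    rw [Fin.prod_univ_succ]
    show b1R (x - u 0) * chainF m (u 0) y (Fin.tail u) = _
    rw [chainF_eq_prod m (u 0) y (Fin.tail u)]
    refine congrArg₂ (· * ·) ?_ ?_
    · rw [Fin.castSucc_zero, Fin.cons_zero, Fin.cons_succ, snoc_zero']
    · refine Finset.prod_congr rfl fun i _ => ?_
      rw [← cons_snoc_succ m x y u i.castSucc, ← cons_snoc_succ m x y u i.succ,
        Fin.succ_castSucc]

lemma cyclic_eq (m : ℕ) (t : ℝ) (v : Fin m → ℝ) :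
    (∏ i : Fin (m+1), b1R ((Fin.cons t v : Fin (m+1) → ℝ) i
        - (Fin.cons t v : Fin (m+1) → ℝ) ⟨(i.1 + 1) % (m+1), Nat.mod_lt _ (by omega)⟩))
      = chainF m t t v := by
  rw [chainF_eq_prod]
  refine Finset.prod_congr rfl fun i _ => ?_
  congr 1
  have hW1 : (Fin.cons t v : Fin (m+1) → ℝ) i
      = (Fin.cons t (Fin.snoc v t) : Fin (m+2) → ℝ) i.castSucc := by
    refine Fin.cases ?_ (fun k => ?_) i
    · rw [Fin.castSucc_zero, Fin.cons_zero, Fin.cons_zero]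
    · rw [Fin.cons_succ, ← Fin.succ_castSucc, Fin.cons_succ, Fin.snoc_castSucc]
  have hW2 : (Fin.cons t v : Fin (m+1) → ℝ)
        ⟨(i.1 + 1) % (m+1), Nat.mod_lt _ (by omega)⟩
      = (Fin.cons t (Fin.snoc v t) : Fin (m+2) → ℝ) i.succ := by
    rw [Fin.cons_succ]
    refine Fin.lastCases ?_ (fun k => ?_) i
    · have h0 : (⟨((Fin.last m).1 + 1) % (m+1), Nat.mod_lt _ (by omega)⟩ : Fin (m+1)) = 0 := by
        apply Fin.ext
        simp [Fin.last]
      rw [h0, Fin.cons_zero, Fin.snoc_last]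
    · have h1 : (⟨((Fin.castSucc k).1 + 1) % (m+1), Nat.mod_lt _ (by omega)⟩ : Fin (m+1))
          = k.succ := by
        apply Fin.ext
        have := k.isLt
        simp [Nat.mod_eq_of_lt (by omega : k.1 + 1 < m + 1)]
      rw [h1, Fin.cons_succ, Fin.snoc_castSucc]
  rw [hW1, hW2]


def nu : Measure ℝ := volume.restrict (Icc (0:ℝ) 1)

instance : IsProbabilityMeasure nu :=
  ⟨by simp [nu, Real.volume_Icc]⟩

lemma integrable_of_bdd {α : Type*} [MeasurableSpace α] {μ : Measure α} [IsFiniteMeasure μ]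
    {f : α → ℝ} (hm : Measurable f) (C : ℝ) (hb : ∀ x, |f x| ≤ C) : Integrable f μ :=
  Integrable.mono' (integrable_const C) hm.aestronglyMeasurable
    (ae_of_all _ (fun x => by simpa using hb x))

lemma nu_integral_eq (f : ℝ → ℝ) : ∫ t, f t ∂nu = ∫ t in (0:ℝ)..1, f t := by
  rw [intervalIntegral.integral_of_le zero_le_one]
  show ∫ t in Icc (0:ℝ) 1, f t = _
  rw [integral_Icc_eq_integral_Ioc]

lemma main (m : ℕ) : ∀ x y : ℝ,
    ∫ u, chainF m x y u ∂(Measure.pi fun _ : Fin m => nu)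
      = (-1:ℝ)^m * (((m+1).factorial : ℝ))⁻¹ * cB (m+1) (x - y) := by
  induction m with
  | zero =>
    intro x y
    have : IsProbabilityMeasure (Measure.pi fun _ : Fin 0 => nu) := by infer_instance
    show ∫ _u, b1R (x - y) ∂(Measure.pi fun _ : Fin 0 => nu) = _
    rw [MeasureTheory.integral_const]
    simp [cB_one]
  | succ m IH =>
    intro x y
    have hmp := ((measurePreserving_piFinSuccAbove (fun _ : Fin (m+1) => nu) 0).symm)
    rw [← hmp.integral_comp (MeasurableEquiv.piFinSuccAbove (fun _ : Fin (m+1) => ℝ) 0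
      ).symm.measurableEmbedding (fun u => chainF (m+1) x y u)]
    have hsymm : ∀ p : ℝ × (Fin m → ℝ),
        (MeasurableEquiv.piFinSuccAbove (fun _ : Fin (m+1) => ℝ) 0).symm p
          = Fin.cons p.1 p.2 := by
      intro p
      rw [MeasurableEquiv.piFinSuccAbove_symm_apply]
      exact Fin.insertNth_zero' p.1 p.2
    have hint : Integrable (fun p : ℝ × (Fin m → ℝ) =>
        chainF (m+1) x y ((MeasurableEquiv.piFinSuccAbove (fun _ : Fin (m+1) => ℝ) 0).symm p))
        (nu.prod (Measure.pi fun _ : Fin m => nu)) := by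
      refine integrable_of_bdd ?_ 1 ?_
      · have : Measurable (fun p : ℝ × (Fin m → ℝ) => chainF (m+1) x y (Fin.cons p.1 p.2)) := by
          have hc : Measurable (fun p : ℝ × (Fin m → ℝ) => (Fin.cons p.1 p.2 : Fin (m+1) → ℝ)) := by
            refine measurable_pi_iff.mpr fun j => ?_
            refine Fin.cases ?_ (fun k => ?_) j
            · simpa using measurable_fst
            · simp only [Fin.cons_succ]; exact (measurable_pi_apply k).comp measurable_snd
          exact (measurable_chainF (m+1)).comp
            ((measurable_const.prodMk measurable_const).prodMk hc)
        simpa only [hsymm] using this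
      · intro p
        exact abs_chainF_le _ _ _ _
    rw [MeasureTheory.integral_prod _ hint]
    have hinner : ∀ t : ℝ,
        (∫ v, chainF (m+1) x y ((MeasurableEquiv.piFinSuccAbove
            (fun _ : Fin (m+1) => ℝ) 0).symm (t, v)) ∂(Measure.pi fun _ : Fin m => nu))
          = (-1:ℝ)^m * (((m+1).factorial : ℝ))⁻¹ * (b1R (x - t) * cB (m+1) (t - y)) := by
      intro t
      have : ∀ v : Fin m → ℝ,
          chainF (m+1) x y ((MeasurableEquiv.piFinSuccAbove
            (fun _ : Fin (m+1) => ℝ) 0).symm (t, v))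
          = b1R (x - t) * chainF m t y v := by
        intro v
        rw [hsymm (t, v)]
        show b1R (x - (Fin.cons t v : Fin (m+1) → ℝ) 0)
            * chainF m ((Fin.cons t v : Fin (m+1) → ℝ) 0) y
              (Fin.tail (Fin.cons t v : Fin (m+1) → ℝ))
          = b1R (x - t) * chainF m t y v
        rw [Fin.cons_zero, Fin.tail_cons]
      simp_rw [this]
      rw [MeasureTheory.integral_const_mul, IH]
      ring
    simp_rw [hinner]
    rw [MeasureTheory.integral_const_mul, nu_integral_eq, key (m+1) (by omega) x y]
    have hfac : (((m+1+1).factorial : ℝ)) = ((m+1).factorial : ℝ) * ((m:ℝ) + 2) := by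
      rw [Nat.factorial_succ]
      push_cast
      ring
    have h1 : ((m+1).factorial : ℝ) ≠ 0 := Nat.cast_ne_zero.mpr (Nat.factorial_ne_zero _)
    have h2 : ((m:ℝ) + 2) ≠ 0 := by positivity
    rw [hfac]
    push_cast
    field_simp
    ring

lemma cube_eq (m : ℕ) :
    (volume : Measure (Fin m → ℝ)).restrict (Set.univ.pi fun _ => Icc (0:ℝ) 1)
      = Measure.pi (fun _ : Fin m => nu) := by
  refine (Measure.pi_eq fun s hs => ?_).symm
  rw [Measure.restrict_apply (MeasurableSet.univ_pi hs), ← Set.pi_inter_distrib,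
    MeasureTheory.volume_pi, Measure.pi_pi]
  refine Finset.prod_congr rfl fun i _ => ?_
  rw [nu, Measure.restrict_apply (hs i)]


end Aux14

theorem statement14 (l : ℕ) (hl : 2 ≤ l) :
    (∫ u in (Set.univ.pi fun _ : Fin l => Set.Icc (0:ℝ) 1),
      ∏ i : Fin l, b1R (u i - u ⟨(i.1 + 1) % l, Nat.mod_lt _ (by omega)⟩))
      = -((bernoulli l : ℚ) : ℝ) / (l.factorial : ℝ) := by
  obtain ⟨m, rfl⟩ : ∃ m, l = m + 1 := ⟨l - 1, by omega⟩
  rw [cube_eq (m+1)]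
  have hmp := ((measurePreserving_piFinSuccAbove (fun _ : Fin (m+1) => nu) 0).symm)
  rw [← hmp.integral_comp (MeasurableEquiv.piFinSuccAbove
    (fun _ : Fin (m+1) => ℝ) 0).symm.measurableEmbedding]
  have hsymm : ∀ p : ℝ × (Fin m → ℝ),
      (MeasurableEquiv.piFinSuccAbove (fun _ : Fin (m+1) => ℝ) 0).symm p
        = Fin.cons p.1 p.2 := by
    intro p
    rw [MeasurableEquiv.piFinSuccAbove_symm_apply]
    exact Fin.insertNth_zero' p.1 p.2
  have hcongr : ∀ p : ℝ × (Fin m → ℝ),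
      (∏ i : Fin (m+1),
        b1R (((MeasurableEquiv.piFinSuccAbove (fun _ : Fin (m+1) => ℝ) 0).symm p) i
          - ((MeasurableEquiv.piFinSuccAbove (fun _ : Fin (m+1) => ℝ) 0).symm p)
            ⟨(i.1 + 1) % (m+1), Nat.mod_lt _ (by omega)⟩))
        = chainF m p.1 p.1 p.2 := by
    intro p
    rw [hsymm p]
    exact cyclic_eq m p.1 p.2
  rw [MeasureTheory.integral_congr_ae (ae_of_all _ hcongr)]
  have hint : Integrable (fun p : ℝ × (Fin m → ℝ) => chainF m p.1 p.1 p.2)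
      (nu.prod (Measure.pi fun _ : Fin m => nu)) := by
    refine integrable_of_bdd ?_ 1 (fun p => abs_chainF_le _ _ _ _)
    exact (measurable_chainF m).comp
      ((measurable_fst.prodMk measurable_fst).prodMk measurable_snd)
  rw [MeasureTheory.integral_prod _ hint]
  have hinner : ∀ t : ℝ,
      (∫ v, chainF m t t v ∂(Measure.pi fun _ : Fin m => nu))
        = (-1:ℝ)^m * (((m+1).factorial : ℝ))⁻¹ * cB (m+1) 0 := by
    intro t
    rw [main m t t, sub_self]
  simp_rw [hinner]
  rw [MeasureTheory.integral_const]
  simp only [probReal_univ, one_smul]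
  have hcB : cB (m+1) 0 = ((bernoulli (m+1) : ℚ) : ℝ) := by
    rw [cB, Int.fract_zero, bernoulliFun_eval_zero]
  rw [hcB]
  have h1 : (((m+1).factorial : ℝ)) ≠ 0 := Nat.cast_ne_zero.mpr (Nat.factorial_ne_zero _)
  rcases Nat.even_or_odd m with hm | hm
  · have hm1 : 1 ≤ m := by omega
    have hodd : Odd (m+1) := Even.add_one hm
    have hB : _root_.bernoulli (m+1) = 0 := by
      rw [bernoulli_eq_bernoulli'_of_ne_one (by omega)]
      exact bernoulli'_eq_zero_of_odd hodd (by omega)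
    rw [hB]
    simp
  · rw [Odd.neg_one_pow hm]
    field_simp



end Paper
end
end
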